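/- For a linear model f(X) = Σᵢ aᵢXᵢ with mutually independent random features X₁,…,Xₚ, the Local Shapley Value of feature l at observation x, defined with value function v(S) = E[f(X) | X_S = x_S] and standard Shapley weights, equals a_l(x_l − E[X_l]). -/

import Mathlib

open Finset MeasureTheory

/-- Shapley value of player `l` for the game `v` on `p` players, with standard weights
`w(S) = (1/p) * C(p-1, |S|)⁻¹`. -/
noncomputable def shapleyValue (p : ℕ) (v : Finset (Fin p) → ℝ) (l : Fin p) : ℝ :=
  ∑ S ∈ (Finset.univ.erase l).powerset,
    (1 / (p : ℝ)) * ((Nat.choose (p - 1) S.card : ℝ))⁻¹ * (v (insert l S) - v S)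

lemma measurePreserving_eval_pi {p : ℕ} (μ : Fin p → Measure ℝ)
    [∀ i, IsProbabilityMeasure (μ i)] (i : Fin p) :
    MeasurePreserving (Function.eval i) (Measure.pi μ) (μ i) := by
  refine ⟨measurable_pi_apply i, ?_⟩
  ext s hs
  rw [Measure.map_apply (measurable_pi_apply i) hs, Set.eval_preimage, Measure.pi_pi]
  rw [Finset.prod_eq_single i (fun j _ hj => by simp [Function.update_of_ne hj])
    (by simp)]
  simp

lemma weight_sum {p : ℕ} (hp : 0 < p) (l : Fin p) :
    ∑ S ∈ (Finset.univ.erase l).powerset,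
      (1 / (p : ℝ)) * ((Nat.choose (p - 1) S.card : ℝ))⁻¹ = 1 := by
  have hcard : (Finset.univ.erase l).card = p - 1 := by
    rw [Finset.card_erase_of_mem (Finset.mem_univ l), Finset.card_univ, Fintype.card_fin]
  rw [Finset.powerset_card_disjiUnion]
  erw [Finset.sum_disjiUnion]
  have : ∀ n ∈ Finset.range ((Finset.univ.erase l).card + 1),
      (∑ S ∈ Finset.powersetCard n (Finset.univ.erase l),
        (1 / (p : ℝ)) * ((Nat.choose (p - 1) S.card : ℝ))⁻¹) = 1 / p := by
    intro n hn
    rw [Finset.mem_range] at hn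
    have hchoose : 0 < Nat.choose (p - 1) n := Nat.choose_pos (by omega)
    rw [Finset.sum_congr rfl (fun S hS => by
      rw [(Finset.mem_powersetCard.1 hS).2]), Finset.sum_const,
      Finset.card_powersetCard, hcard, nsmul_eq_mul]
    field_simp
  rw [Finset.sum_congr rfl this, Finset.sum_const, hcard, nsmul_eq_mul]
  have : ((p - 1 + 1 : ℕ) : ℝ) = p := by
    rw [Nat.sub_add_cancel hp]
  rw [Finset.card_range, this]
  field_simp

theorem localShapley_linear_model (p : ℕ) (hp : 0 < p) (a x : Fin p → ℝ)
    (μ : Fin p → Measure ℝ) [∀ i, IsProbabilityMeasure (μ i)]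
    (hint : ∀ i, Integrable (id : ℝ → ℝ) (μ i)) (l : Fin p) :
    shapleyValue p
      (fun S => ∫ y, (∑ i, a i * (if i ∈ S then x i else y i)) ∂(Measure.pi μ)) l
      = a l * (x l - ∫ t, t ∂(μ l)) := by
  set m : Fin p → ℝ := fun i => ∫ t, t ∂(μ i) with hm
  have heval : ∀ i : Fin p, Integrable (fun y : Fin p → ℝ => y i) (Measure.pi μ) := by
    intro i
    exact (measurePreserving_eval_pi μ i).integrable_comp aestronglyMeasurable_id |>.2
      (by simpa using hint i)
  have hIeval : ∀ i : Fin p, ∫ y, y i ∂(Measure.pi μ) = m i := by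
    intro i
    show ∫ y, y i ∂(Measure.pi μ) = ∫ t, t ∂(μ i)
    rw [← (measurePreserving_eval_pi μ i).map_eq]
    exact (integral_map (φ := Function.eval i) (μ := Measure.pi μ) (f := fun t => t)
      (measurable_pi_apply i).aemeasurable aestronglyMeasurable_id).symm
  have hv : ∀ S : Finset (Fin p),
      (∫ y, (∑ i, a i * (if i ∈ S then x i else y i)) ∂(Measure.pi μ))
        = ∑ i, a i * (if i ∈ S then x i else m i) := by
    intro S
    rw [integral_finset_sum]
    · refine Finset.sum_congr rfl fun i _ => ?_
      by_cases h : i ∈ S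
      · simp [h, measure_univ]
      · simp only [h, if_false]
        rw [integral_const_mul, hIeval]
    · intro i _
      by_cases h : i ∈ S
      · simp only [h, if_true]; exact integrable_const _
      · simp only [h, if_false]
        exact (heval i).const_mul _
  unfold shapleyValue
  have hdiff : ∀ S ∈ (Finset.univ.erase l).powerset,
      ((fun S => ∫ y, (∑ i, a i * (if i ∈ S then x i else y i)) ∂(Measure.pi μ))
        (insert l S) -
       (fun S => ∫ y, (∑ i, a i * (if i ∈ S then x i else y i)) ∂(Measure.pi μ)) S)
        = a l * (x l - m l) := by
    intro S hS
    have hlS : l ∉ S := fun h =>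
      (Finset.mem_erase.1 (Finset.mem_powerset.1 hS h)).1 rfl
    simp only [hv, ← Finset.sum_sub_distrib]
    rw [Finset.sum_eq_single l]
    · simp [hlS, mul_sub]
    · intro i _ hi
      have : (i ∈ insert l S) ↔ (i ∈ S) := by
        simp [Finset.mem_insert, hi]
      by_cases h : i ∈ S <;> simp [h, hi, this.2, fun hh => (this.1 hh)]
    · intro h; exact absurd (Finset.mem_univ l) h
  rw [Finset.sum_congr rfl fun S hS => by rw [hdiff S hS]]
  rw [← Finset.sum_mul, weight_sum hp l, one_mul, hm]
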